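/- Any family of 2n−1 matchings, each of size n, in a bipartite graph possesses a rainbow matching of size n (one edge chosen from each of n distinct matchings of the family, forming a matching). -/
import Mathlib


variable {V : Type*}

/-- A matching: a set of non-loop edges that are pairwise vertex-disjoint. -/
def IsMatching (M : Set (Sym2 V)) : Prop :=
  (∀ e ∈ M, ¬ e.IsDiag) ∧ ∀ e ∈ M, ∀ f ∈ M, e ≠ f → ∀ v, v ∈ e → v ∉ f

/-- A vertex is covered by an edge set if it belongs to some edge. -/
def covered (M : Set (Sym2 V)) (v : V) : Prop := ∃ e ∈ M, v ∈ e

/-- A `K`–`F`-alternating path: a (simple) nonempty list of vertices whose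
odd-numbered edges (0-indexed: even positions) lie in `K` and even-numbered edges lie in `F`. -/
def AltPath (K F : Set (Sym2 V)) (p : List V) : Prop :=
  p ≠ [] ∧ p.Nodup ∧ ∀ i, ∀ h : i + 1 < p.length,
    s(p[i]'(Nat.lt_of_succ_lt h), p[i+1]'h) ∈ (if i % 2 = 0 then K else F)

/-- A rainbow matching of size `n` for a family `M` of edge sets: `n` edges, one from each of
`n` distinct members, forming a matching. -/
def HasRainbow {V : Type*} [DecidableEq V] {m : ℕ} (n : ℕ) (M : Fin m → Finset (Sym2 V)) : Prop :=
  ∃ (f : Fin n → Fin m) (e : Fin n → Sym2 V),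
    Function.Injective f ∧ (∀ j, e j ∈ M (f j)) ∧ Function.Injective e ∧
    IsMatching ((Finset.image e Finset.univ : Finset (Sym2 V)) : Set (Sym2 V))

set_option linter.unusedSectionVars false
set_option linter.unusedVariables false

namespace DriskoAux

variable {V : Type*} [DecidableEq V] {m : ℕ}

def PairM (S : Finset (V × V)) : Prop :=
  ∀ p ∈ S, ∀ q ∈ S, p ≠ q → p.1 ≠ q.1 ∧ p.2 ≠ q.2

def PR (P : Fin m → Finset (V × V)) (T : Finset (Fin m × V × V)) : Prop :=
  (∀ x ∈ T, (x.2.1, x.2.2) ∈ P x.1) ∧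
  ∀ x ∈ T, ∀ y ∈ T, x ≠ y → x.1 ≠ y.1 ∧ x.2.1 ≠ y.2.1 ∧ x.2.2 ≠ y.2.2

def csT (T : Finset (Fin m × V × V)) : Finset (Fin m) := T.image (fun x => x.1)
def asT (T : Finset (Fin m × V × V)) : Finset V := T.image (fun x => x.2.1)
def bsT (T : Finset (Fin m × V × V)) : Finset V := T.image (fun x => x.2.2)

variable {P : Fin m → Finset (V × V)} {T T' : Finset (Fin m × V × V)}

lemma PR.mono (h : PR P T) (hs : T' ⊆ T) : PR P T' :=
  ⟨fun x hx => h.1 x (hs hx), fun x hx y hy hxy => h.2 x (hs hx) y (hs hy) hxy⟩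

lemma PR.b_eq (h : PR P T) {x y : Fin m × V × V} (hx : x ∈ T) (hy : y ∈ T)
    (hb : x.2.2 = y.2.2) : x = y := by
  by_contra hne; exact (h.2 x hx y hy hne).2.2 hb

lemma PR.a_eq (h : PR P T) {x y : Fin m × V × V} (hx : x ∈ T) (hy : y ∈ T)
    (hb : x.2.1 = y.2.1) : x = y := by
  by_contra hne; exact (h.2 x hx y hy hne).2.1 hb

lemma PR.c_eq (h : PR P T) {x y : Fin m × V × V} (hx : x ∈ T) (hy : y ∈ T)
    (hb : x.1 = y.1) : x = y := by
  by_contra hne; exact (h.2 x hx y hy hne).1 hb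

lemma PR.card_bsT (h : PR P T) : (bsT T).card = T.card :=
  Finset.card_image_of_injOn (fun x hx y hy hb => h.b_eq hx hy hb)

lemma PR.card_asT (h : PR P T) : (asT T).card = T.card :=
  Finset.card_image_of_injOn (fun x hx y hy hb => h.a_eq hx hy hb)

lemma PR.card_csT (h : PR P T) : (csT T).card = T.card :=
  Finset.card_image_of_injOn (fun x hx y hy hb => h.c_eq hx hy hb)

lemma PR.insert_new (h : PR P T) {i : Fin m} {a b : V} (hmem : (a, b) ∈ P i)
    (hc : ∀ x ∈ T, x.1 ≠ i) (ha : a ∉ asT T) (hb : b ∉ bsT T) :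
    PR P (insert (i, a, b) T) := by
  constructor
  · intro x hx
    rcases Finset.mem_insert.1 hx with rfl | hx
    · exact hmem
    · exact h.1 x hx
  · intro x hx y hy hxy
    rcases Finset.mem_insert.1 hx with rfl | hx <;>
      rcases Finset.mem_insert.1 hy with rfl | hy
    · exact absurd rfl hxy
    · refine ⟨fun e => hc y hy e.symm, fun e => ha ?_, fun e => hb ?_⟩
      · exact Finset.mem_image.2 ⟨y, hy, e.symm⟩
      · exact Finset.mem_image.2 ⟨y, hy, e.symm⟩
    · refine ⟨fun e => hc x hx e, fun e => ha ?_, fun e => hb ?_⟩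
      · exact Finset.mem_image.2 ⟨x, hx, e⟩
      · exact Finset.mem_image.2 ⟨x, hx, e⟩
    · exact h.2 x hx y hy hxy

/-- `b` can be "freed" from the rainbow `T` using extra colors from `W`,
leaving triples with b-coordinate outside `S` untouched. -/
def Wit (P : Fin m → Finset (V × V)) (T : Finset (Fin m × V × V))
    (W : Finset (Fin m)) (S : Finset V) (b : V) : Prop :=
  ∃ T' γ, PR P T' ∧ T'.card = T.card ∧
    (∀ x ∈ T', x.1 ∈ csT T ∪ W) ∧
    asT T' = asT T ∧
    (∀ x ∈ T, x.2.2 ∉ S → x ∈ T') ∧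
    γ ∉ bsT T ∧
    bsT T' = (insert γ (bsT T)).erase b

lemma Wit.mono {W W' : Finset (Fin m)} {S S' : Finset V} {b : V}
    (hW : W ⊆ W') (hS : S ⊆ S') (h : Wit P T W S b) : Wit P T W' S' b := by
  obtain ⟨T', γ, h1, h2, h3, h4, h5, h6, h7⟩ := h
  exact ⟨T', γ, h1, h2, fun x hx => Finset.union_subset_union_right hW (h3 x hx), h4,
    fun x hx hb => h5 x hx (fun c => hb (hS c)), h6, h7⟩



lemma grow (hPM : ∀ i, PairM (P i)) (hT : PR P T) (U : Finset (Fin m))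
    (hUd : ∀ u ∈ U, u ∉ csT T)
    (hPc : ∀ u ∈ U, T.card + 1 ≤ (P u).card)
    (hno : ¬ ∃ T', PR P T' ∧ T'.card = T.card + 1) :
    ∀ W ⊆ U, ∃ S, S ⊆ bsT T ∧ W.card ≤ S.card ∧ ∀ b ∈ S, Wit P T W S b := by
  intro W
  induction W using Finset.cons_induction with
  | empty => exact fun _ => ⟨∅, Finset.empty_subset _, le_rfl, fun b hb => absurd hb (by simp)⟩
  | cons u W hu IH =>
    intro hWU
    have hWU' : W ⊆ U := (Finset.subset_cons hu).trans hWU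
    have huU : u ∈ U := hWU (Finset.mem_cons_self u W)
    obtain ⟨S, hSsub, hScard, hSwit⟩ := IH hWU'
    have hSk : S.card ≤ T.card := le_trans (Finset.card_le_card hSsub) (le_of_eq hT.card_bsT)
    -- counting argument to find a good pair in P u
    classical
    set bad1 : Finset (V × V) := (P u).filter (fun p => p.2 ∈ bsT T ∧ p.2 ∉ S) with hbad1
    set bad2 : Finset (V × V) := (P u).filter (fun p => ∃ x ∈ T, x.2.1 = p.1 ∧ x.2.2 ∈ S)
      with hbad2
    have hinj2 : ∀ p ∈ P u, ∀ q ∈ P u, p.2 = q.2 → p = q := by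
      intro p hp q hq h
      by_contra hne
      exact (hPM u p hp q hq hne).2 h
    have hinj1 : ∀ p ∈ P u, ∀ q ∈ P u, p.1 = q.1 → p = q := by
      intro p hp q hq h
      by_contra hne
      exact (hPM u p hp q hq hne).1 h
    have hb1 : bad1.card ≤ T.card - S.card := by
      have h1 : bad1.card ≤ (bsT T \ S).card := by
        apply Finset.card_le_card_of_injOn (fun p => p.2)
        · intro p hp
          have := Finset.mem_filter.1 hp
          exact Finset.mem_sdiff.2 ⟨this.2.1, this.2.2⟩
        · intro p hp q hq h
          exact hinj2 p (Finset.mem_of_mem_filter p hp) q (Finset.mem_of_mem_filter q hq) h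
      rwa [Finset.card_sdiff_of_subset hSsub, hT.card_bsT] at h1
    have hb2 : bad2.card ≤ S.card := by
      have h1 : bad2.card ≤ (T.filter (fun x => x.2.2 ∈ S)).card := by
        apply Finset.card_le_card_of_injOn (fun p => p.1) ?_ ?_ |>.trans
          (Finset.card_image_le (f := fun x => x.2.1))
        · intro p hp
          obtain ⟨x, hx, hx1, hx2⟩ := (Finset.mem_filter.1 hp).2
          exact Finset.mem_image.2 ⟨x, Finset.mem_filter.2 ⟨hx, hx2⟩, hx1⟩
        · intro p hp q hq h
          exact hinj1 p (Finset.mem_of_mem_filter p hp) q (Finset.mem_of_mem_filter q hq) h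
      have h2 : (T.filter (fun x => x.2.2 ∈ S)).card ≤ S.card := by
        apply Finset.card_le_card_of_injOn (fun x => x.2.2)
        · intro x hx; exact (Finset.mem_filter.1 hx).2
        · intro x hx y hy h
          exact hT.b_eq (Finset.mem_of_mem_filter x hx) (Finset.mem_of_mem_filter y hy) h
      exact h1.trans h2
    have hlt : (bad1 ∪ bad2).card < (P u).card := by
      have := Finset.card_union_le bad1 bad2
      have := hPc u huU
      omega
    obtain ⟨p, hpP, hpbad⟩ : ∃ p ∈ P u, p ∉ bad1 ∪ bad2 := by
      by_contra hcon
      push_neg at hcon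
      have : P u ⊆ bad1 ∪ bad2 := hcon
      exact absurd (Finset.card_le_card this) (by omega)
    rw [Finset.mem_union] at hpbad
    push_neg at hpbad
    have hβ : p.2 ∈ bsT T → p.2 ∈ S := by
      intro h
      by_contra h2
      exact hpbad.1 (Finset.mem_filter.2 ⟨hpP, h, h2⟩)
    have hα : ∀ x ∈ T, x.2.1 = p.1 → x.2.2 ∉ S := by
      intro x hx h1 h2
      exact hpbad.2 (Finset.mem_filter.2 ⟨hpP, x, hx, h1, h2⟩)
    -- Stage 1: free up β := p.2 (if it is covered)
    obtain ⟨T₂, γ, hT₂PR, hT₂card, hT₂col, hT₂as, hT₂pres, hγ, hT₂bs, hdis⟩ :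
        ∃ T₂ γ, PR P T₂ ∧ T₂.card = T.card ∧ (∀ x ∈ T₂, x.1 ∈ csT T ∪ W) ∧
          asT T₂ = asT T ∧ (∀ x ∈ T, x.2.2 ∉ S → x ∈ T₂) ∧ γ ∉ bsT T ∧
          bsT T₂ = (insert γ (bsT T)).erase p.2 ∧ (γ = p.2 ∨ p.2 ∈ S) := by
      by_cases hb : p.2 ∈ bsT T
      · obtain ⟨T', γ, h1, h2, h3, h4, h5, h6, h7⟩ := hSwit p.2 (hβ hb)
        exact ⟨T', γ, h1, h2, h3, h4, h5, h6, h7, Or.inr (hβ hb)⟩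
      · exact ⟨T, p.2, hT, rfl, fun x hx => Finset.mem_union_left _
          (Finset.mem_image.2 ⟨x, hx, rfl⟩), rfl, fun x hx _ => hx, hb,
          (Finset.erase_insert hb).symm, Or.inl rfl⟩
    have hβT₂ : p.2 ∉ bsT T₂ := by rw [hT₂bs]; exact Finset.notMem_erase _ _
    have hucol : ∀ x ∈ T₂, x.1 ≠ u := by
      intro x hx he
      rcases Finset.mem_union.1 (hT₂col x hx) with h | h
      · rw [he] at h; exact hUd u huU h
      · rw [he] at h; exact hu h
    by_cases ha : p.1 ∈ asT T
    · -- extension case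
      obtain ⟨x₀, hx₀T, hx₀a⟩ := Finset.mem_image.1 ha
      have hb'S : x₀.2.2 ∉ S := hα x₀ hx₀T hx₀a
      have hx₀T₂ : x₀ ∈ T₂ := hT₂pres x₀ hx₀T hb'S
      have hb'X : x₀.2.2 ∈ bsT T := Finset.mem_image.2 ⟨x₀, hx₀T, rfl⟩
      have hβb' : p.2 ≠ x₀.2.2 := by
        rcases hdis with h | h
        · rw [← h]; intro e; exact hγ (e ▸ hb'X)
        · intro e; exact hb'S (e ▸ h)
      have hnew : (u, p.1, p.2) ∉ T₂.erase x₀ := by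
        intro h
        exact hucol _ (Finset.mem_of_mem_erase h) rfl
      have haerase : p.1 ∉ asT (T₂.erase x₀) := by
        intro h
        obtain ⟨y, hy, hy1⟩ := Finset.mem_image.1 h
        have := hT₂PR.a_eq (Finset.mem_of_mem_erase hy) hx₀T₂ (hy1.trans hx₀a.symm)
        exact (Finset.ne_of_mem_erase hy) this
      have hberase : p.2 ∉ bsT (T₂.erase x₀) := by
        intro h
        obtain ⟨y, hy, hy1⟩ := Finset.mem_image.1 h
        exact hβT₂ (Finset.mem_image.2 ⟨y, Finset.mem_of_mem_erase hy, hy1⟩)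
      set T₃ := insert (u, p.1, p.2) (T₂.erase x₀) with hT₃
      have hT₃PR : PR P T₃ := by
        apply (hT₂PR.mono (Finset.erase_subset _ _)).insert_new
        · simpa using hpP
        · exact fun x hx => hucol x (Finset.mem_of_mem_erase hx)
        · exact haerase
        · exact hberase
      have hT₂pos : 1 ≤ T₂.card := Finset.card_pos.2 ⟨x₀, hx₀T₂⟩
      have hT₃card : T₃.card = T.card := by
        rw [hT₃, Finset.card_insert_of_notMem hnew, Finset.card_erase_of_mem hx₀T₂]
        omega
      have hT₃col : ∀ x ∈ T₃, x.1 ∈ csT T ∪ Finset.cons u W hu := by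
        intro x hx
        rcases Finset.mem_insert.1 hx with rfl | hx
        · exact Finset.mem_union_right _ (Finset.mem_cons_self u W)
        · rcases Finset.mem_union.1 (hT₂col x (Finset.mem_of_mem_erase hx)) with h | h
          · exact Finset.mem_union_left _ h
          · exact Finset.mem_union_right _ (Finset.mem_cons_of_mem h)
      have hT₃as : asT T₃ = asT T := by
        ext v
        constructor
        · intro hv
          obtain ⟨y, hy, hy1⟩ := Finset.mem_image.1 hv
          rcases Finset.mem_insert.1 hy with rfl | hy
          · exact hy1 ▸ ha
          · rw [← hT₂as]
            exact Finset.mem_image.2 ⟨y, Finset.mem_of_mem_erase hy, hy1⟩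
        · intro hv
          rw [← hT₂as] at hv
          obtain ⟨y, hy, hy1⟩ := Finset.mem_image.1 hv
          by_cases hyx : y = x₀
          · subst hyx
            exact Finset.mem_image.2 ⟨(u, p.1, p.2), Finset.mem_insert_self _ _,
              (hy1 ▸ hx₀a ▸ rfl : (u, p.1, p.2).2.1 = v)⟩
          · exact Finset.mem_image.2 ⟨y, Finset.mem_insert_of_mem
              (Finset.mem_erase.2 ⟨hyx, hy⟩), hy1⟩
      have hT₃pres : ∀ x ∈ T, x.2.2 ∉ insert x₀.2.2 S → x ∈ T₃ := by
        intro x hx hxb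
        rw [Finset.mem_insert] at hxb
        push_neg at hxb
        have hxT₂ : x ∈ T₂ := hT₂pres x hx hxb.2
        have : x ≠ x₀ := fun e => hxb.1 (e ▸ rfl)
        exact Finset.mem_insert_of_mem (Finset.mem_erase.2 ⟨this, hxT₂⟩)
      have hT₃bs : bsT T₃ = (insert γ (bsT T)).erase x₀.2.2 := by
        ext w
        constructor
        · intro hw
          obtain ⟨y, hy, hy1⟩ := Finset.mem_image.1 hw
          rcases Finset.mem_insert.1 hy with rfl | hy
          · -- w = p.2
            refine Finset.mem_erase.2 ⟨hy1 ▸ hβb', ?_⟩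
            rcases hdis with h | h
            · exact hy1 ▸ h ▸ Finset.mem_insert_self _ _
            · exact Finset.mem_insert_of_mem (hy1 ▸ hSsub h)
          · have hyT₂ : y ∈ T₂ := Finset.mem_of_mem_erase hy
            have hwb' : w ≠ x₀.2.2 := by
              intro e
              exact (Finset.ne_of_mem_erase hy)
                (hT₂PR.b_eq hyT₂ hx₀T₂ (hy1.trans e))
            have : w ∈ bsT T₂ := Finset.mem_image.2 ⟨y, hyT₂, hy1⟩
            rw [hT₂bs] at this
            exact Finset.mem_erase.2 ⟨hwb', Finset.mem_of_mem_erase this⟩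
        · intro hw
          obtain ⟨hwb', hw⟩ := Finset.mem_erase.1 hw
          by_cases hwp : w = p.2
          · exact Finset.mem_image.2 ⟨(u, p.1, p.2), Finset.mem_insert_self _ _, hwp.symm⟩
          · have : w ∈ bsT T₂ := by
              rw [hT₂bs]; exact Finset.mem_erase.2 ⟨hwp, hw⟩
            obtain ⟨y, hy, hy1⟩ := Finset.mem_image.1 this
            have : y ≠ x₀ := fun e => hwb' (hy1 ▸ e ▸ rfl)
            exact Finset.mem_image.2 ⟨y, Finset.mem_insert_of_mem
              (Finset.mem_erase.2 ⟨this, hy⟩), hy1⟩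
      refine ⟨insert x₀.2.2 S, Finset.insert_subset hb'X hSsub, ?_, ?_⟩
      · rw [Finset.card_insert_of_notMem hb'S, Finset.card_cons]
        omega
      · intro b hb
        rcases Finset.mem_insert.1 hb with rfl | hb
        · exact ⟨T₃, γ, hT₃PR, hT₃card, hT₃col, hT₃as, hT₃pres, hγ, hT₃bs⟩
        · exact (hSwit b hb).mono (Finset.subset_cons hu) (Finset.subset_insert _ _)
    · -- augmentation case: contradiction
      exfalso
      apply hno
      have hnew : (u, p.1, p.2) ∉ T₂ := fun h => hucol _ h rfl
      refine ⟨insert (u, p.1, p.2) T₂, ?_, ?_⟩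
      · apply hT₂PR.insert_new
        · simpa using hpP
        · exact hucol
        · rw [hT₂as]; exact ha
        · exact hβT₂
      · rw [Finset.card_insert_of_notMem hnew, hT₂card]



lemma aug (hPM : ∀ i, PairM (P i)) (hT : PR P T) (U : Finset (Fin m))
    (hUd : ∀ u ∈ U, u ∉ csT T)
    (hUc : T.card + 1 ≤ U.card)
    (hPc : ∀ u ∈ U, T.card + 1 ≤ (P u).card) :
    ∃ T', PR P T' ∧ T'.card = T.card + 1 := by
  by_contra hno
  obtain ⟨S, hSsub, hScard, _⟩ := grow hPM hT U hUd hPc hno U Finset.Subset.rfl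
  have h1 : S.card ≤ (bsT T).card := Finset.card_le_card hSsub
  have h2 : (bsT T).card = T.card := hT.card_bsT
  omega

lemma core : ∀ (n : ℕ) {m : ℕ} (P : Fin m → Finset (V × V)), 2 * n ≤ m + 1 →
    (∀ i, PairM (P i)) → (∀ i, n ≤ (P i).card) → ∃ T, PR P T ∧ T.card = n := by
  intro n
  induction n with
  | zero => exact fun P _ _ _ => ⟨∅, ⟨fun x hx => absurd hx (by simp),
      fun x hx => absurd hx (by simp)⟩, rfl⟩
  | succ n IH =>
    intro m P hm hPM hPc
    obtain ⟨T, hT, hTc⟩ := IH P (by omega) hPM (fun i => le_trans (Nat.le_succ n) (hPc i))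
    have hcsT : (csT T).card = n := hT.card_csT.trans hTc
    set U : Finset (Fin m) := Finset.univ \ csT T with hU
    have hUd : ∀ u ∈ U, u ∉ csT T := fun u hu => (Finset.mem_sdiff.1 hu).2
    have hUcard : U.card = m - n := by
      rw [hU, Finset.card_sdiff_of_subset (Finset.subset_univ _), hcsT, Finset.card_univ,
        Fintype.card_fin]
    have hUc : T.card + 1 ≤ U.card := by omega
    obtain ⟨T', hT', hT'c⟩ := aug hPM hT U hUd hUc
      (fun u _ => by rw [hTc]; exact hPc u)
    exact ⟨T', hT', by omega⟩



noncomputable def ori (c : V → Bool) (e : Sym2 V) : V × V :=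
  if c e.out.1 then e.out else (e.out.2, e.out.1)

lemma ori_spec (c : V → Bool) (e : Sym2 V) : s((ori c e).1, (ori c e).2) = e := by
  unfold ori
  split
  · exact e.out_eq
  · rw [Sym2.eq_swap]; exact e.out_eq

lemma ori_inj (c : V → Bool) : Function.Injective (ori c) := by
  intro e f h
  rw [← ori_spec c e, ← ori_spec c f, h]

lemma ori_color {c : V → Bool} {e : Sym2 V}
    (hbc : ∀ u v : V, e = s(u, v) → c u ≠ c v) :
    c (ori c e).1 = true ∧ c (ori c e).2 = false := by
  have hne := hbc (ori c e).1 (ori c e).2 (ori_spec c e).symm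
  unfold ori at hne ⊢
  by_cases h : c e.out.1 = true
  · rw [if_pos h] at hne ⊢
    refine ⟨h, ?_⟩
    cases hc2 : c e.out.2 with
    | false => rfl
    | true => exact absurd (h.trans hc2.symm) hne
  · rw [if_neg h] at hne ⊢
    have h' : c e.out.1 = false := by revert h; cases c e.out.1 <;> simp
    refine ⟨?_, h'⟩
    cases hc2 : c e.out.2 with
    | false => exact absurd (hc2.trans h'.symm) hne
    | true => rfl

end DriskoAux

/-- Drisko: any family of `2n−1` matchings of size `n` in a bipartite graph
(witnessed by a 2-coloring `c` making every edge bichromatic) has a rainbow matching of size `n`. -/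
theorem stmt_2 {V : Type*} [DecidableEq V] (n : ℕ) (c : V → Bool)
    (M : Fin (2 * n - 1) → Finset (Sym2 V))
    (hM : ∀ i, IsMatching ((M i : Finset (Sym2 V)) : Set (Sym2 V)) ∧ (M i).card = n)
    (hbip : ∀ i, ∀ e ∈ M i, ∀ u v : V, e = s(u, v) → c u ≠ c v) :
    HasRainbow n M := by
  classical
  set P : Fin (2 * n - 1) → Finset (V × V) := fun i => (M i).image (DriskoAux.ori c) with hP
  have hPmem : ∀ i, ∀ p ∈ P i, s(p.1, p.2) ∈ M i ∧ c p.1 = true ∧ c p.2 = false := by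
    intro i p hp
    obtain ⟨e, he, rfl⟩ := Finset.mem_image.1 hp
    have h1 := DriskoAux.ori_spec c e
    have h2 := DriskoAux.ori_color (c := c) (e := e) (hbip i e he)
    exact ⟨by rw [h1]; exact he, h2⟩
  have hPM : ∀ i, DriskoAux.PairM (P i) := by
    intro i p hp q hq hne
    obtain ⟨hpM, hpc1, hpc2⟩ := hPmem i p hp
    obtain ⟨hqM, hqc1, hqc2⟩ := hPmem i q hq
    have hef : s(p.1, p.2) ≠ s(q.1, q.2) := by
      intro h
      rcases Sym2.eq_iff.1 h with ⟨h1, h2⟩ | ⟨h1, h2⟩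
      · exact hne (Prod.ext h1 h2)
      · rw [h1, hqc2] at hpc1; exact Bool.noConfusion hpc1
    have hdis := (hM i).1.2 _ hpM _ hqM hef
    constructor
    · intro h
      exact hdis p.1 (Sym2.mem_mk_left _ _) (h ▸ Sym2.mem_mk_left _ _)
    · intro h
      exact hdis p.2 (Sym2.mem_mk_right _ _) (h ▸ Sym2.mem_mk_right _ _)
  have hcard : ∀ i, n ≤ (P i).card := by
    intro i
    rw [hP]
    simp only []
    rw [Finset.card_image_of_injective _ (DriskoAux.ori_inj c), (hM i).2]
  obtain ⟨T, hT, hTc⟩ := DriskoAux.core n P (by omega) hPM hcard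
  have hTmem : ∀ x ∈ T, s(x.2.1, x.2.2) ∈ M x.1 ∧ c x.2.1 = true ∧ c x.2.2 = false := by
    intro x hx
    exact hPmem x.1 (x.2.1, x.2.2) (hT.1 x hx)
  let g : Fin n → Fin (2 * n - 1) × V × V := fun j => (T.equivFin.symm (Fin.cast hTc.symm j)).1
  have hgT : ∀ j, g j ∈ T := fun j => (T.equivFin.symm _).2
  have hginj : Function.Injective g := by
    intro j j' h
    have h2 : T.equivFin.symm (Fin.cast hTc.symm j) = T.equivFin.symm (Fin.cast hTc.symm j') :=
      Subtype.ext h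
    have h3 := T.equivFin.symm.injective h2
    exact Fin.ext (by simpa using congrArg Fin.val h3)
  refine ⟨fun j => (g j).1, fun j => s((g j).2.1, (g j).2.2), ?_, ?_, ?_, ?_, ?_⟩
  · intro j j' h
    exact hginj (hT.c_eq (hgT j) (hgT j') h)
  · intro j
    exact (hTmem (g j) (hgT j)).1
  · intro j j' h
    rcases Sym2.eq_iff.1 h with ⟨h1, h2⟩ | ⟨h1, h2⟩
    · exact hginj (hT.a_eq (hgT j) (hgT j') h1)
    · have c1 := (hTmem (g j) (hgT j)).2.1
      have c2 := (hTmem (g j') (hgT j')).2.2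
      rw [h1, c2] at c1; exact Bool.noConfusion c1
  · intro e' he'
    obtain ⟨j, -, rfl⟩ := Finset.mem_image.1 (Finset.mem_coe.1 he')
    rw [Sym2.mk_isDiag_iff]
    intro h
    have c1 := (hTmem (g j) (hgT j)).2.1
    have c2 := (hTmem (g j) (hgT j)).2.2
    rw [h, c2] at c1; exact Bool.noConfusion c1
  · intro e' he' f' hf' hne v hv hvf
    obtain ⟨j, -, rfl⟩ := Finset.mem_image.1 (Finset.mem_coe.1 he')
    obtain ⟨j', -, rfl⟩ := Finset.mem_image.1 (Finset.mem_coe.1 hf')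
    have hgg : g j ≠ g j' := by
      intro h; exact hne (by rw [h])
    have hdist := hT.2 (g j) (hgT j) (g j') (hgT j') hgg
    have c1 := (hTmem (g j) (hgT j)).2
    have c2 := (hTmem (g j') (hgT j')).2
    rcases Sym2.mem_iff.1 hv with rfl | rfl <;> rcases Sym2.mem_iff.1 hvf with h | h
    · exact hdist.2.1 h
    · rw [h, c2.2] at c1; exact Bool.noConfusion c1.1
    · rw [h, c2.1] at c1; exact Bool.noConfusion c1.2
    · exact hdist.2.2 h
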